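/- In the inhomogeneous random K-out graph H(n; μ, K) with r ≥ 2, 1 ≤ K_1 ≤ … ≤ K_r < n, n sufficiently large, μ̃ = Σ_{i=1}^{r−1} μ_i, and K_r ≥ ⌈4·((1/2)^{K_r−1}/μ̃) + 1⌉, the total union-bound sum satisfies Σ_{ℓ=2}^{⌊n/2⌋} C(n, ℓ) · P[B_{n,ℓ}] ≤ (μ̃²/(1−μ̃)) · Ψ(n, μ, K), where Ψ(n, μ, K) = max{ exp(−2(1−μ̃)((K_r−1)/4 − (1/2)^{K_r−1}/μ̃)), exp(−(1−μ̃)(n/2)(1 − e^{−1} − (1/2)^{K_r−1}/μ̃)) }. -/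

import Mathlib

open Finset Filter

noncomputable section

/-- A configuration assigns to each vertex a class in `Fin r` and a selection set. -/
abbrev Config (n r : ℕ) := Fin n → Fin r × Finset (Fin n)

/-- Probability weight of a configuration: each vertex `v` independently has class `i`
with probability `μ i`, and given class `i`, its selection set is a uniformly random
`K i`-subset of the other vertices. -/
noncomputable def wt {r : ℕ} (n : ℕ) (μ : Fin r → ℝ) (K : Fin r → ℕ)
    (ω : Config n r) : ℝ :=
  ∏ v : Fin n,
    if (ω v).2.card = K (ω v).1 ∧ v ∉ (ω v).2 then
      μ (ω v).1 / ((n - 1).choose (K (ω v).1) : ℝ)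
    else 0

/-- Probability of an event in the inhomogeneous random K-out graph model. -/
noncomputable def Pr {r : ℕ} (n : ℕ) (μ : Fin r → ℝ) (K : Fin r → ℕ)
    (E : Set (Config n r)) : ℝ :=
  ∑ ω : Config n r, E.indicator (wt n μ K) ω

/-- Expectation of a real-valued random variable in the model. -/
noncomputable def Ex {r : ℕ} (n : ℕ) (μ : Fin r → ℝ) (K : Fin r → ℕ)
    (f : Config n r → ℝ) : ℝ :=
  ∑ ω : Config n r, f ω * wt n μ K ω

/-- The undirected graph induced by a configuration: `u ~ v` iff at least one of
them selected the other. -/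
def graphOf {n r : ℕ} (ω : Config n r) : SimpleGraph (Fin n) where
  Adj u v := u ≠ v ∧ (u ∈ (ω v).2 ∨ v ∈ (ω u).2)
  symm := ⟨fun _ _ h => ⟨h.1.symm, h.2.symm⟩⟩
  loopless := ⟨fun _ h => h.1 rfl⟩

/-- Probability that the inhomogeneous random K-out graph is connected. -/
noncomputable def Pconn {r : ℕ} (n : ℕ) (μ : Fin r → ℝ) (K : Fin r → ℕ) : ℝ :=
  Pr n μ K {ω | (graphOf ω).Connected}

/-- The event `U_{ij}`: vertices `i` and `j` both have class `c`, each selected exactly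
the other, and no other vertex selected either of them. -/
def Uevent {n r : ℕ} (c : Fin r) (i j : Fin n) : Set (Config n r) :=
  {ω | (ω i).1 = c ∧ (ω j).1 = c ∧ (ω i).2 = {j} ∧ (ω j).2 = {i} ∧
    ∀ l : Fin n, l ≠ i → l ≠ j → i ∉ (ω l).2 ∧ j ∉ (ω l).2}

/-- `Y`: the number of isolated components consisting of two class-`c` vertices. -/
noncomputable def Ycount {n r : ℕ} (c : Fin r) (ω : Config n r) : ℝ :=
  ∑ p : Fin n × Fin n,
    if p.1 < p.2 then (Uevent c p.1 p.2).indicator (fun _ => (1 : ℝ)) ω else 0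

/-- The event `B_{n,ℓ}`: the set of vertices with index `< ℓ` is isolated, i.e. there is
no edge between it and its complement. -/
def Bevent (n r : ℕ) (l : ℕ) : Set (Config n r) :=
  {ω | ∀ u v : Fin n, (u : ℕ) < l → ¬ (v : ℕ) < l → u ∉ (ω v).2 ∧ v ∉ (ω u).2}


lemma nat_choose_ratio (a b m : ℕ) (hab : a ≤ b) :
    a.choose m * b ^ m ≤ b.choose m * a ^ m := by
  have key : a.descFactorial m * b ^ m ≤ b.descFactorial m * a ^ m := by
    have hb : b ^ m = ∏ _i ∈ range m, b := by rw [Finset.prod_const, Finset.card_range]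
    have ha : a ^ m = ∏ _i ∈ range m, a := by rw [Finset.prod_const, Finset.card_range]
    rw [Nat.descFactorial_eq_prod_range, Nat.descFactorial_eq_prod_range, hb, ha,
      ← Finset.prod_mul_distrib, ← Finset.prod_mul_distrib]
    refine Finset.prod_le_prod' fun i _ => ?_
    calc (a - i) * b = a * b - i * b := Nat.sub_mul a i b
      _ ≤ a * b - i * a := Nat.sub_le_sub_left (Nat.mul_le_mul_left i hab) _
      _ = b * a - i * a := by rw [Nat.mul_comm a b]
      _ = (b - i) * a := (Nat.sub_mul b i a).symm
  have h1 : Nat.factorial m * (a.choose m * b ^ m) ≤ Nat.factorial m * (b.choose m * a ^ m) := by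
    calc Nat.factorial m * (a.choose m * b ^ m) = a.descFactorial m * b ^ m := by
          rw [Nat.descFactorial_eq_factorial_mul_choose, mul_assoc]
      _ ≤ b.descFactorial m * a ^ m := key
      _ = Nat.factorial m * (b.choose m * a ^ m) := by
          rw [Nat.descFactorial_eq_factorial_mul_choose, mul_assoc]
  exact Nat.le_of_mul_le_mul_left h1 (Nat.factorial_pos m)

lemma choose_ratio_le (a b m : ℕ) (hab : a ≤ b) (hm : m ≤ b) :
    (a.choose m : ℝ) / (b.choose m : ℝ) ≤ ((a : ℝ) / (b : ℝ)) ^ m := by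
  rcases Nat.eq_zero_or_pos b with hb | hb
  · subst hb; interval_cases m; simp [Nat.le_zero.mp hab]
  have hcb : (0:ℝ) < (b.choose m : ℝ) := by exact_mod_cast Nat.choose_pos hm
  have hbp : (0:ℝ) < ((b:ℝ)) ^ m := by positivity
  rw [div_pow, div_le_div_iff₀ hcb hbp]
  have := nat_choose_ratio a b m hab
  calc (a.choose m : ℝ) * (b:ℝ)^m = ((a.choose m * b ^ m : ℕ) : ℝ) := by push_cast; ring
    _ ≤ ((b.choose m * a ^ m : ℕ) : ℝ) := by exact_mod_cast this
    _ = (a:ℝ)^m * (b.choose m : ℝ) := by push_cast; ring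

lemma card_filter_lt (n l : ℕ) (h : l ≤ n) :
    ({v : Fin n | (v : ℕ) < l} : Finset (Fin n)).card = l := by
  classical
  have : ({v : Fin n | (v : ℕ) < l} : Finset (Fin n)) = Finset.map (Fin.castLEEmb h) univ := by
    ext v
    simp only [Finset.mem_map, Finset.mem_univ, true_and, Finset.mem_filter, Finset.mem_coe]
    constructor
    · intro hv
      have hv' : (v : ℕ) < l := by simpa using hv
      exact ⟨⟨v, hv'⟩, by simp [Fin.castLEEmb, Fin.castLE]⟩
    · rintro ⟨u, rfl⟩
      simp [Fin.castLEEmb, Fin.castLE, u.isLt]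
  rw [this, Finset.card_map, Finset.card_univ, Fintype.card_fin]

lemma Pr_Bevent (n r l : ℕ) (μ : Fin r → ℝ) (K : Fin r → ℕ) (hl1 : 1 ≤ l) (hln : l < n) :
    Pr n μ K (Bevent n r l) =
      (∑ c, μ c * (((l-1).choose (K c) : ℝ) / ((n-1).choose (K c) : ℝ))) ^ l *
      (∑ c, μ c * (((n-l-1).choose (K c) : ℝ) / ((n-1).choose (K c) : ℝ))) ^ (n-l) := by
  classical
  set S : Finset (Fin n) := ({v : Fin n | (v : ℕ) < l} : Finset (Fin n)) with hS
  have hScard : S.card = l := card_filter_lt n l hln.le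
  set side : Fin n → Finset (Fin n) := fun v => if (v : ℕ) < l then S else Sᶜ with hside
  set h : Fin n → Fin r × Finset (Fin n) → ℝ := fun v y =>
    if y.2.card = K y.1 ∧ v ∉ y.2 ∧ y.2 ⊆ side v then μ y.1 / ((n-1).choose (K y.1) : ℝ) else 0
    with hh
  have hmemside : ∀ v : Fin n, v ∈ side v := by
    intro v
    by_cases hv : (v : ℕ) < l
    · simp [hside, hv, hS]
    · have hvS : v ∉ S := by simp [hS, hv]
      simp [hside, hv, hvS]
  have hsidecard : ∀ v : Fin n, ((side v).erase v).card = if (v:ℕ) < l then l - 1 else n - l - 1 := by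
    intro v
    rw [Finset.card_erase_of_mem (hmemside v)]
    by_cases hv : (v : ℕ) < l
    · simp [hside, hv, hScard]
    · simp [hside, hv, Finset.card_compl, hScard]
  -- pointwise identity
  have hpoint : ∀ ω : Config n r, (Bevent n r l).indicator (wt n μ K) ω = ∏ v, h v (ω v) := by
    intro ω
    by_cases hω : ω ∈ Bevent n r l
    · rw [Set.indicator_of_mem hω, wt]
      refine Finset.prod_congr rfl fun v _ => ?_
      have hsub : (ω v).2 ⊆ side v := by
        intro u hu
        by_cases hv : (v : ℕ) < l
        · simp only [hside, hv, if_true, hS]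
          simp only [Finset.mem_filter, Finset.mem_univ, true_and, Set.mem_setOf_eq, Finset.mem_coe]
          by_contra hul
          exact ((hω v u hv hul).2) hu
        · simp only [hside, hv, if_false, Finset.mem_compl, hS]
          simp only [Finset.mem_filter, Finset.mem_univ, true_and, Set.mem_setOf_eq, Finset.mem_coe]
          intro hul
          exact (hω u v hul hv).1 hu
      simp only [hh]
      by_cases hc : (ω v).2.card = K (ω v).1 ∧ v ∉ (ω v).2
      · rw [if_pos hc, if_pos ⟨hc.1, hc.2, hsub⟩]
      · rw [if_neg hc, if_neg (by tauto)]
    · rw [Set.indicator_of_notMem hω]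
      have : ∃ u v : Fin n, (u : ℕ) < l ∧ ¬ (v : ℕ) < l ∧ (u ∈ (ω v).2 ∨ v ∈ (ω u).2) := by
        by_contra hcon
        push_neg at hcon
        exact hω fun u v hu hv => hcon u v hu (Nat.le_of_not_lt hv)
      obtain ⟨u, v, hu, hv, hcase⟩ := this
      symm
      rcases hcase with hm | hm
      · refine Finset.prod_eq_zero (Finset.mem_univ v) ?_
        simp only [hh]
        rw [if_neg]
        rintro ⟨-, -, hsub⟩
        have := hsub hm
        simp only [hside, hv, if_false, Finset.mem_compl, hS] at this
        simp only [Finset.mem_filter, Finset.mem_univ, true_and, Set.mem_setOf_eq] at this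
        exact this hu
      · refine Finset.prod_eq_zero (Finset.mem_univ u) ?_
        simp only [hh]
        rw [if_neg]
        rintro ⟨-, -, hsub⟩
        have := hsub hm
        simp only [hside, hu, if_true, hS] at this
        simp only [Finset.mem_filter, Finset.mem_univ, true_and, Set.mem_setOf_eq] at this
        exact hv this
  -- factorize
  have hfact : Pr n μ K (Bevent n r l) = ∏ v, ∑ y, h v y := by
    rw [Pr]
    rw [Fintype.prod_sum (f := h)]
    exact Finset.sum_congr rfl fun ω _ => hpoint ω
  -- per-vertex sums
  have hvsum : ∀ v : Fin n, (∑ y, h v y) =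
      if (v:ℕ) < l then (∑ c, μ c * (((l-1).choose (K c) : ℝ) / ((n-1).choose (K c) : ℝ)))
      else (∑ c, μ c * (((n-l-1).choose (K c) : ℝ) / ((n-1).choose (K c) : ℝ))) := by
    intro v
    rw [Fintype.sum_prod_type]
    have inner : ∀ c : Fin r, (∑ T : Finset (Fin n), h v (c, T)) =
        μ c * ((((side v).erase v).card.choose (K c) : ℝ) / ((n-1).choose (K c) : ℝ)) := by
      intro c
      have hfilter : (univ.filter fun T : Finset (Fin n) =>
          T.card = K c ∧ v ∉ T ∧ T ⊆ side v) = ((side v).erase v).powersetCard (K c) := by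
        ext T
        simp only [Finset.mem_filter, Finset.mem_univ, true_and, Finset.mem_powersetCard,
          Finset.subset_erase]
        tauto
      calc (∑ T : Finset (Fin n), h v (c, T))
          = ∑ T ∈ univ.filter (fun T : Finset (Fin n) =>
              T.card = K c ∧ v ∉ T ∧ T ⊆ side v), (μ c / ((n-1).choose (K c) : ℝ)) := by
            rw [Finset.sum_filter]
        _ = (((side v).erase v).powersetCard (K c)).card • (μ c / ((n-1).choose (K c) : ℝ)) := by
            rw [hfilter, Finset.sum_const]
        _ = μ c * ((((side v).erase v).card.choose (K c) : ℝ) / ((n-1).choose (K c) : ℝ)) := by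
            rw [Finset.card_powersetCard, nsmul_eq_mul]
            ring
    rw [Finset.sum_congr rfl fun c _ => inner c]
    by_cases hv : (v:ℕ) < l
    · rw [if_pos hv]
      apply Finset.sum_congr rfl
      intro c _
      rw [hsidecard v, if_pos hv]
    · rw [if_neg hv]
      apply Finset.sum_congr rfl
      intro c _
      rw [hsidecard v, if_neg hv]
  rw [hfact, Finset.prod_congr rfl fun v _ => hvsum v, Finset.prod_ite]
  rw [Finset.prod_const, Finset.prod_const]
  have h1 : (univ.filter fun v : Fin n => (v:ℕ) < l).card = l := hScard
  have h2 : (univ.filter fun v : Fin n => ¬ (v:ℕ) < l).card = n - l := by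
    have := Finset.card_filter_add_card_filter_not
      (s := (univ : Finset (Fin n))) (p := fun v : Fin n => (v:ℕ) < l)
    rw [Finset.card_univ, Fintype.card_fin] at this
    omega
  rw [h1, h2]

lemma entropy_bound (n l : ℕ) (hl : l ≤ n) (p : ℝ) (h0 : 0 ≤ p) (h1 : p ≤ 1) :
    (n.choose l : ℝ) * (p ^ l * (1 - p) ^ (n - l)) ≤ 1 := by
  have hsum : (1 : ℝ) = ∑ k ∈ range (n+1), p ^ k * (1-p) ^ (n-k) * (n.choose k : ℝ) := by
    have := add_pow p (1-p) n
    simp only [add_sub_cancel] at this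
    rw [← this]
    norm_num
  have hterm : p ^ l * (1-p) ^ (n-l) * (n.choose l : ℝ) ≤
      ∑ k ∈ range (n+1), p ^ k * (1-p) ^ (n-k) * (n.choose k : ℝ) := by
    refine Finset.single_le_sum (f := fun k => p ^ k * (1-p) ^ (n-k) * (n.choose k : ℝ)) (fun k _ => ?_) (Finset.mem_range.mpr (Nat.lt_succ_of_le hl))
    have : (0:ℝ) ≤ 1 - p := by linarith
    positivity
  calc (n.choose l : ℝ) * (p ^ l * (1 - p) ^ (n - l))
      = p ^ l * (1-p) ^ (n-l) * (n.choose l : ℝ) := by ring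
    _ ≤ ∑ k ∈ range (n+1), p ^ k * (1-p) ^ (n-k) * (n.choose k : ℝ) := hterm
    _ = 1 := hsum.symm

lemma conv_bound (t : ℝ) (h0 : 0 ≤ t) (h1 : t ≤ 1) :
    Real.exp (-t) ≤ 1 - (1 - Real.exp (-1)) * t := by
  have h := convexOn_exp.2 (Set.mem_univ (0:ℝ)) (Set.mem_univ (-1:ℝ))
    (by linarith : (0:ℝ) ≤ 1 - t) h0 (by ring)
  simp only [smul_eq_mul, mul_zero, mul_neg, mul_one, zero_add, Real.exp_zero] at h
  nlinarith [h]

lemma exp_neg_one_lt_half : Real.exp (-1) < 1/2 := by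
  have h := Real.exp_one_gt_d9
  rw [Real.exp_neg]
  rw [inv_lt_iff_one_lt_mul₀ (by positivity)]
  nlinarith

lemma geom_bound (μt : ℝ) (h0 : 0 < μt) (h1 : μt < 1) (m : ℕ) :
    ∑ l ∈ Icc 2 m, μt ^ l ≤ μt ^ 2 / (1 - μt) := by
  have key : ∀ m, 1 ≤ m → (1 - μt) * ∑ l ∈ Icc 2 m, μt ^ l ≤ μt ^ 2 - μt ^ (m+1) := by
    intro m hm
    induction m, hm using Nat.le_induction with
    | base => simp
    | succ m hm ih =>
      rw [Finset.sum_Icc_succ_top (by omega : 2 ≤ m + 1)]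
      have hp : μt ^ (m+1+1) = μt * μt ^ (m+1) := by ring
      nlinarith [pow_pos h0 (m+1)]
  rcases Nat.lt_or_ge m 2 with hm | hm
  · have : Icc 2 m = ∅ := by
      apply Finset.Icc_eq_empty; omega
    rw [this]; simp
    exact div_nonneg (by positivity) (by linarith)
  · have h := key m (by omega)
    have hp : 0 < μt ^ (m+1) := pow_pos h0 _
    exact (le_div_iff₀ (by linarith : (0:ℝ) < 1 - μt)).mpr (by nlinarith)

set_option maxHeartbeats 1000000 in
lemma per_l_analytic (n l k : ℕ) (μt X : ℝ) (hμt0 : 0 < μt) (hμt1 : μt < 1)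
    (hX : X = (1/2:ℝ) ^ (k-1) / μt) (hXk : 4 * X + 1 ≤ (k:ℝ)) (hk : 2 ≤ k)
    (hl2 : 2 ≤ l) (hln : 2 * l ≤ n)
    (A B : ℝ) (hA0 : 0 ≤ A) (hB0 : 0 ≤ B)
    (hA : A ≤ (((l:ℝ)-1)/((n:ℝ)-1)) * (μt * (1 + (1-μt) * X)))
    (hB : B ≤ (((n:ℝ)-1-(l:ℝ))/((n:ℝ)-1)) * μt + (1-μt) * (((n:ℝ)-1-(l:ℝ))/((n:ℝ)-1)) ^ k) :
    (n.choose l : ℝ) * (A ^ l * B ^ (n-l)) ≤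
      μt ^ l * max (Real.exp (-2 * (1-μt) * (((k:ℝ)-1)/4 - X)))
        (Real.exp (-(1-μt) * ((n:ℝ)/2) * (1 - Real.exp (-1) - X))) := by
  have hn4 : (4:ℝ) ≤ (n:ℝ) := by exact_mod_cast (by omega : 4 ≤ n)
  have hlr : (2:ℝ) ≤ (l:ℝ) := by exact_mod_cast hl2
  have hlnr : 2 * (l:ℝ) ≤ (n:ℝ) := by exact_mod_cast hln
  have hkr : (2:ℝ) ≤ (k:ℝ) := by exact_mod_cast hk
  have hn1 : (0:ℝ) < (n:ℝ) - 1 := by linarith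
  have hX0 : 0 < X := by rw [hX]; positivity
  have hX4 : X ≤ ((k:ℝ)-1)/4 := by linarith
  set y : ℝ := 1 - μt with hy
  have hy0 : 0 < y := by simp [hy]; linarith
  have hy1 : y ≤ 1 := by simp [hy]; linarith
  set q : ℝ := ((l:ℝ)-1)/((n:ℝ)-1) with hq
  set β : ℝ := ((n:ℝ)-1-(l:ℝ))/((n:ℝ)-1) with hβ
  have hq0 : 0 ≤ q := by apply div_nonneg <;> linarith
  have hβ0 : 0 ≤ β := by apply div_nonneg <;> linarith
  have hβ1 : β ≤ 1 := by rw [hβ, div_le_one hn1]; linarith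
  -- B ≤ β * exp(-(y * (1 - β^(k-1))))
  have hβk1 : β ^ (k-1) ≤ 1 := pow_le_one₀ hβ0 hβ1
  have hβk10 : 0 ≤ β ^ (k-1) := pow_nonneg hβ0 _
  have hBe : B ≤ β * Real.exp (-(y * (1 - β ^ (k-1)))) := by
    have hpow : β ^ k = β * β ^ (k-1) := by
      conv_lhs => rw [show k = (k-1) + 1 by omega]
      rw [pow_succ]; ring
    have h1 : B ≤ β * (1 - y * (1 - β ^ (k-1))) := by
      rw [hpow] at hB
      have : β * μt + y * (β * β ^ (k-1)) = β * (1 - y * (1 - β ^ (k-1))) := by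
        rw [hy]; ring
      linarith [hB, this]
    have h2 : 1 - y * (1 - β ^ (k-1)) ≤ Real.exp (-(y * (1 - β ^ (k-1)))) := by
      have := Real.add_one_le_exp (-(y * (1 - β ^ (k-1))))
      linarith
    calc B ≤ β * (1 - y * (1 - β ^ (k-1))) := h1
      _ ≤ β * Real.exp (-(y * (1 - β ^ (k-1)))) := by
          apply mul_le_mul_of_nonneg_left h2 hβ0
  -- main chain
  set e₂ : ℝ := Real.exp (-(y * (1 - β ^ (k-1)))) with he₂
  have he₂0 : 0 ≤ e₂ := Real.exp_nonneg _
  have hAq : A ≤ q * (μt * (1 + y * X)) := hA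
  have hAq0 : 0 ≤ q * (μt * (1 + y * X)) := by positivity
  have step1 : (n.choose l : ℝ) * (A ^ l * B ^ (n-l)) ≤
      (n.choose l : ℝ) * ((q * (μt * (1 + y * X))) ^ l * (β * e₂) ^ (n-l)) := by
    apply mul_le_mul_of_nonneg_left _ (by positivity)
    apply mul_le_mul (pow_le_pow_left₀ hA0 hAq _) (pow_le_pow_left₀ hB0 hBe _)
      (by positivity) (by positivity)
  have hp : (l:ℝ)/(n:ℝ) ≤ 1 := by
    rw [div_le_one (by linarith)]; linarith
  have hp0 : 0 ≤ (l:ℝ)/(n:ℝ) := by positivity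
  have hqp : q ≤ (l:ℝ)/(n:ℝ) := by
    rw [hq, div_le_div_iff₀ hn1 (by linarith : (0:ℝ) < (n:ℝ))]
    have h := mul_le_mul_of_nonneg_left hlnr (le_of_lt (by linarith : (0:ℝ) < 1))
    nlinarith [hlr, hn4, hlnr]
  have hβp : β ≤ 1 - (l:ℝ)/(n:ℝ) := by
    rw [hβ]
    have : 1 - (l:ℝ)/(n:ℝ) = ((n:ℝ)-(l:ℝ))/(n:ℝ) := by field_simp
    rw [this, div_le_div_iff₀ hn1 (by linarith : (0:ℝ) < (n:ℝ))]
    nlinarith [hlr, hn4, hlnr]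
  have hent : (n.choose l : ℝ) * (q ^ l * β ^ (n-l)) ≤ 1 := by
    calc (n.choose l : ℝ) * (q ^ l * β ^ (n-l))
        ≤ (n.choose l : ℝ) * (((l:ℝ)/(n:ℝ)) ^ l * (1 - (l:ℝ)/(n:ℝ)) ^ (n-l)) := by
          apply mul_le_mul_of_nonneg_left _ (by positivity)
          apply mul_le_mul (pow_le_pow_left₀ hq0 hqp _) (pow_le_pow_left₀ hβ0 hβp _)
            (by positivity) (by positivity)
      _ ≤ 1 := entropy_bound n l (by omega) _ hp0 hp
  have hexp1 : (1 + y * X) ^ l ≤ Real.exp ((l:ℝ) * (y * X)) := by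
    calc (1 + y * X) ^ l ≤ Real.exp (y * X) ^ l := by
          apply pow_le_pow_left₀ (by positivity)
          linarith [Real.add_one_le_exp (y * X)]
      _ = Real.exp ((l:ℝ) * (y * X)) := (Real.exp_nat_mul _ l).symm
  have step2 : (n.choose l : ℝ) * ((q * (μt * (1 + y * X))) ^ l * (β * e₂) ^ (n-l)) ≤
      μt ^ l * Real.exp ((l:ℝ) * (y * X) + ((n-l : ℕ):ℝ) * (-(y * (1 - β ^ (k-1))))) := by
    have expand : (n.choose l : ℝ) * ((q * (μt * (1 + y * X))) ^ l * (β * e₂) ^ (n-l)) =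
        ((n.choose l : ℝ) * (q ^ l * β ^ (n-l))) * (μt ^ l * ((1 + y * X) ^ l * e₂ ^ (n-l))) := by
      rw [mul_pow, mul_pow, mul_pow]; ring
    rw [expand]
    have he2p : e₂ ^ (n-l) = Real.exp (((n-l:ℕ):ℝ) * (-(y * (1 - β ^ (k-1))))) := by
      rw [he₂, ← Real.exp_nat_mul]
    calc ((n.choose l : ℝ) * (q ^ l * β ^ (n-l))) * (μt ^ l * ((1 + y * X) ^ l * e₂ ^ (n-l)))
        ≤ 1 * (μt ^ l * ((1 + y * X) ^ l * e₂ ^ (n-l))) := by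
          apply mul_le_mul_of_nonneg_right hent
          positivity
      _ = μt ^ l * ((1 + y * X) ^ l * e₂ ^ (n-l)) := by ring
      _ ≤ μt ^ l * (Real.exp ((l:ℝ) * (y * X)) * e₂ ^ (n-l)) := by
          apply mul_le_mul_of_nonneg_left _ (by positivity)
          apply mul_le_mul_of_nonneg_right hexp1 (by positivity)
      _ = μt ^ l * Real.exp ((l:ℝ) * (y * X) + ((n-l : ℕ):ℝ) * (-(y * (1 - β ^ (k-1))))) := by
          first
          | rw [he2p, ← Real.exp_add]
          | rw [he2p]
  -- exponent bound
  have hcast : ((n-l : ℕ):ℝ) = (n:ℝ) - (l:ℝ) := by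
    rw [Nat.cast_sub (by omega)]
  have hck : ((k-1 : ℕ):ℝ) = (k:ℝ) - 1 := by
    rw [Nat.cast_sub (by omega)]; simp
  have hβexp : β ^ (k-1) ≤ Real.exp (-((l:ℝ) * ((k:ℝ)-1) / ((n:ℝ)-1))) := by
    have hb : β ≤ Real.exp (-((l:ℝ)/((n:ℝ)-1))) := by
      have h1 : β = 1 - (l:ℝ)/((n:ℝ)-1) := by rw [hβ]; field_simp
      have := Real.add_one_le_exp (-((l:ℝ)/((n:ℝ)-1)))
      linarith
    calc β ^ (k-1) ≤ Real.exp (-((l:ℝ)/((n:ℝ)-1))) ^ (k-1) := pow_le_pow_left₀ hβ0 hb _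
      _ = Real.exp (((k-1:ℕ):ℝ) * (-((l:ℝ)/((n:ℝ)-1)))) := (Real.exp_nat_mul _ _).symm
      _ = Real.exp (-((l:ℝ) * ((k:ℝ)-1) / ((n:ℝ)-1))) := by
          rw [hck]; ring_nf
  have hfinal : Real.exp ((l:ℝ) * (y * X) + ((n-l : ℕ):ℝ) * (-(y * (1 - β ^ (k-1))))) ≤
      max (Real.exp (-2 * (1-μt) * (((k:ℝ)-1)/4 - X)))
        (Real.exp (-(1-μt) * ((n:ℝ)/2) * (1 - Real.exp (-1) - X))) := by
    rw [hcast]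
    set em : ℝ := Real.exp (-1) with hem
    have hem1 : em < 1/2 := exp_neg_one_lt_half
    have hem0 : 0 < em := Real.exp_pos _
    rcases le_or_gt ((n:ℝ)-1) ((l:ℝ) * ((k:ℝ)-1)) with hcase | hcase
    · -- case A : use E2
      apply le_max_of_le_right
      apply Real.exp_le_exp.mpr
      have h1 : β ^ (k-1) ≤ em := by
        calc β ^ (k-1) ≤ Real.exp (-((l:ℝ) * ((k:ℝ)-1) / ((n:ℝ)-1))) := hβexp
          _ ≤ em := by
            apply Real.exp_le_exp.mpr
            rw [neg_le_neg_iff, le_div_iff₀ hn1]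
            linarith
      have h2 : (l:ℝ) * (y * X) ≤ ((n:ℝ)/2) * (y * X) := by
        apply mul_le_mul_of_nonneg_right (by linarith) (by positivity)
      have h3 : ((n:ℝ) - (l:ℝ)) * (y * (1 - β ^ (k-1))) ≥ ((n:ℝ)/2) * (y * (1 - em)) := by
        apply mul_le_mul (by linarith) _ (mul_nonneg (by linarith) (by linarith)) (by linarith)
        apply mul_le_mul_of_nonneg_left (by linarith) (by linarith)
      have hRHS : -(1-μt) * ((n:ℝ)/2) * (1 - em - X) =
          ((n:ℝ)/2) * (y * X) - ((n:ℝ)/2) * (y * (1 - em)) := by rw [hy]; ring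
      linarith [h2, h3]
    · -- case B : use E1
      apply le_max_of_le_left
      apply Real.exp_le_exp.mpr
      set t : ℝ := (l:ℝ) * ((k:ℝ)-1) / ((n:ℝ)-1) with ht
      have ht0 : 0 ≤ t := by
        apply div_nonneg (mul_nonneg (by linarith only [hlr]) (by linarith only [hkr]))
          (by linarith only [hn1])
      have ht1 : t ≤ 1 := by
        rw [ht, div_le_one hn1]; linarith only [hcase]
      have h1 : β ^ (k-1) ≤ 1 - (1 - em) * t := by
        calc β ^ (k-1) ≤ Real.exp (-t) := hβexp
          _ ≤ 1 - (1 - em) * t := conv_bound t ht0 ht1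
      have hem2 : (0:ℝ) ≤ 1 - em := by linarith only [hem1]
      have h2 : ((n:ℝ)-(l:ℝ)) * (y * ((1-em)*t)) ≤ ((n:ℝ) - (l:ℝ)) * (y * (1 - β ^ (k-1))) := by
        apply mul_le_mul_of_nonneg_left _ (by linarith only [hlnr, hlr])
        apply mul_le_mul_of_nonneg_left (by linarith only [h1]) (by linarith only [hy0])
      have h3 : (l:ℝ) * (y * ((1-em) * ((k:ℝ)-1) / 2)) ≤ ((n:ℝ)-(l:ℝ)) * (y * ((1-em)*t)) := by
        rw [ht]
        have hnl2 : 1/2 ≤ ((n:ℝ)-(l:ℝ))/((n:ℝ)-1) := by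
          rw [le_div_iff₀ hn1]; linarith only [hlnr]
        have expand : ((n:ℝ)-(l:ℝ)) * (y * ((1-em)* ((l:ℝ) * ((k:ℝ)-1) / ((n:ℝ)-1)))) =
            ((l:ℝ) * (y * ((1-em) * ((k:ℝ)-1)))) * (((n:ℝ)-(l:ℝ))/((n:ℝ)-1)) := by
          field_simp
        have expand2 : (l:ℝ) * (y * ((1-em) * ((k:ℝ)-1) / 2)) =
            ((l:ℝ) * (y * ((1-em) * ((k:ℝ)-1)))) * (1/2) := by ring
        rw [expand, expand2]
        apply mul_le_mul_of_nonneg_left hnl2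
        have hyle : (0:ℝ) ≤ y := le_of_lt hy0
        have hkk : (0:ℝ) ≤ (k:ℝ) - 1 := by linarith only [hkr]
        positivity
      have hbr : X - (1-em) * ((k:ℝ)-1) / 2 ≤ X - ((k:ℝ)-1)/4 := by
        have hp := mul_nonneg (by linarith only [hem1] : (0:ℝ) ≤ 1/2 - em)
          (by linarith only [hkr] : (0:ℝ) ≤ (k:ℝ)-1)
        linarith only [hp]
      have hbr0 : X - ((k:ℝ)-1)/4 ≤ 0 := by linarith only [hX4]
      have e2 : (l:ℝ) * (X - (1-em) * ((k:ℝ)-1) / 2) ≤ 2 * (X - ((k:ℝ)-1)/4) := by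
        have h4 : X - (1-em) * ((k:ℝ)-1) / 2 ≤ 0 := by linarith only [hbr, hbr0]
        have hp := mul_nonneg (by linarith only [hlr] : (0:ℝ) ≤ (l:ℝ) - 2)
          (by linarith only [h4] : (0:ℝ) ≤ -(X - (1-em) * ((k:ℝ)-1) / 2))
        linarith only [hp, hbr]
      have key : (l:ℝ) * (y * X) - (l:ℝ) * (y * ((1-em) * ((k:ℝ)-1) / 2)) ≤
          2 * y * (X - ((k:ℝ)-1)/4) := by
        have e1 : (l:ℝ) * (y * X) - (l:ℝ) * (y * ((1-em) * ((k:ℝ)-1) / 2)) =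
            y * ((l:ℝ) * (X - (1-em) * ((k:ℝ)-1) / 2)) := by ring
        rw [e1]
        calc y * ((l:ℝ) * (X - (1-em) * ((k:ℝ)-1) / 2)) ≤ y * (2 * (X - ((k:ℝ)-1)/4)) := by
              apply mul_le_mul_of_nonneg_left e2 (le_of_lt hy0)
          _ = 2 * y * (X - ((k:ℝ)-1)/4) := by ring
      have goal_eq : -2 * (1-μt) * (((k:ℝ)-1)/4 - X) = 2 * y * (X - ((k:ℝ)-1)/4) := by
        rw [hy]; ring
      rw [goal_eq]
      have expand3 : (l:ℝ) * (y * X) + ((n:ℝ) - (l:ℝ)) * (-(y * (1 - β ^ (k-1)))) =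
          (l:ℝ) * (y * X) - ((n:ℝ) - (l:ℝ)) * (y * (1 - β ^ (k-1))) := by ring
      rw [expand3]
      calc (l:ℝ) * (y * X) - ((n:ℝ) - (l:ℝ)) * (y * (1 - β ^ (k-1)))
          ≤ (l:ℝ) * (y * X) - ((n:ℝ) - (l:ℝ)) * (y * ((1-em)*t)) := sub_le_sub_left h2 _
        _ ≤ (l:ℝ) * (y * X) - (l:ℝ) * (y * ((1-em) * ((k:ℝ)-1) / 2)) := sub_le_sub_left h3 _
        _ ≤ 2 * y * (X - ((k:ℝ)-1)/4) := key
  calc (n.choose l : ℝ) * (A ^ l * B ^ (n-l))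
      ≤ (n.choose l : ℝ) * ((q * (μt * (1 + y * X))) ^ l * (β * e₂) ^ (n-l)) := step1
    _ ≤ μt ^ l * Real.exp ((l:ℝ) * (y * X) + ((n-l : ℕ):ℝ) * (-(y * (1 - β ^ (k-1))))) := step2
    _ ≤ μt ^ l * max (Real.exp (-2 * (1-μt) * (((k:ℝ)-1)/4 - X)))
        (Real.exp (-(1-μt) * ((n:ℝ)/2) * (1 - Real.exp (-1) - X))) := by
        apply mul_le_mul_of_nonneg_left hfinal (by positivity)
/-- eq. (26) of the paper. For all sufficiently large `n`, for every
admissible `K` with `K_r ≥ ⌈4·((1/2)^{K_r−1}/μ̃) + 1⌉`, the union-bound sum satisfies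
`∑_{ℓ=2}^{⌊n/2⌋} C(n,ℓ)·P[B_{n,ℓ}] ≤ (μ̃²/(1−μ̃))·Ψ(n, μ, K)`. -/
theorem union_bound_sum_le_Psi
    (r : ℕ) (hr : 2 ≤ r) (μ : Fin r → ℝ)
    (hμ : ∀ i, 0 < μ i) (hsum : ∑ i, μ i = 1)
    (lst : Fin r) (hlst : (lst : ℕ) = r - 1)
    (μt : ℝ) (hμt : μt = ∑ i ∈ Finset.univ.erase lst, μ i) :
    ∃ N : ℕ, ∀ n, N ≤ n → ∀ K : Fin r → ℕ,
      Monotone K → (∀ i, 1 ≤ K i) → (∀ i, K i < n) →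
      (⌈4 * ((1 / 2 : ℝ) ^ (K lst - 1) / μt) + 1⌉ ≤ (K lst : ℤ)) →
      ∑ l ∈ Finset.Icc 2 (n / 2), (n.choose l : ℝ) * Pr n μ K (Bevent n r l) ≤
        (μt ^ 2 / (1 - μt)) *
          max
            (Real.exp (-2 * (1 - μt) *
              (((K lst : ℝ) - 1) / 4 - (1 / 2 : ℝ) ^ (K lst - 1) / μt)))
            (Real.exp (-(1 - μt) * ((n : ℝ) / 2) *
              (1 - Real.exp (-1) - (1 / 2 : ℝ) ^ (K lst - 1) / μt))) := by
  refine ⟨4, fun n hn K hKmono hK1 hKn hceil => ?_⟩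
  classical
  -- basic constants
  have hμlst : μ lst = 1 - μt := by
    have h := Finset.add_sum_erase univ μ (mem_univ lst)
    rw [hsum] at h
    rw [hμt]; linarith
  have hμt1 : μt < 1 := by have := hμ lst; linarith
  have hμt0 : 0 < μt := by
    have h0r : 0 < r := by omega
    have hne : (⟨0, h0r⟩ : Fin r) ≠ lst := by
      intro h
      have : ((⟨0, h0r⟩ : Fin r) : ℕ) = (lst : ℕ) := by rw [h]
      rw [hlst] at this
      simp only [Fin.val_mk] at this
      omega
    have hi0 : (⟨0, h0r⟩ : Fin r) ∈ univ.erase lst := Finset.mem_erase.mpr ⟨hne, mem_univ _⟩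
    have hle := Finset.single_le_sum (f := μ) (fun i _ => (hμ i).le) hi0
    rw [hμt]
    calc (0:ℝ) < μ ⟨0, h0r⟩ := hμ _
      _ ≤ _ := hle
  set k : ℕ := K lst with hkdef
  set X : ℝ := (1/2:ℝ) ^ (k-1) / μt with hXdef
  have hX0 : 0 < X := by rw [hXdef]; positivity
  have hXk : 4 * X + 1 ≤ (k:ℝ) := by
    have h1 := Int.le_ceil (4 * X + 1)
    have h2 : ((⌈4 * X + 1⌉ : ℤ) : ℝ) ≤ ((k:ℤ) : ℝ) := by exact_mod_cast hceil
    push_cast at h2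
    linarith
  have hk2 : 2 ≤ k := by
    by_contra h
    push_neg at h
    have : (k:ℝ) ≤ 1 := by exact_mod_cast (by omega : k ≤ 1)
    linarith
  -- max expression is nonnegative
  set M : ℝ := max
      (Real.exp (-2 * (1 - μt) * (((k : ℝ) - 1) / 4 - X)))
      (Real.exp (-(1 - μt) * ((n : ℝ) / 2) * (1 - Real.exp (-1) - X))) with hMdef
  have hM0 : 0 ≤ M := le_trans (Real.exp_pos _).le (le_max_left _ _)
  -- per-term bound
  have per_l : ∀ l ∈ Finset.Icc 2 (n/2),
      (n.choose l : ℝ) * Pr n μ K (Bevent n r l) ≤ μt ^ l * M := by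
    intro l hl
    rw [Finset.mem_Icc] at hl
    obtain ⟨hl2, hlhalf⟩ := hl
    have hln : 2 * l ≤ n := by
      have := (Nat.le_div_iff_mul_le (by omega : 0 < 2)).mp hlhalf
      omega
    have hlltn : l < n := by omega
    rw [Pr_Bevent n r l μ K (by omega) hlltn]
    set q : ℝ := ((l:ℝ) - 1) / ((n:ℝ) - 1) with hq
    set β : ℝ := ((n:ℝ) - 1 - (l:ℝ)) / ((n:ℝ) - 1) with hβ
    have hn1 : (0:ℝ) < (n:ℝ) - 1 := by
      have : (2:ℝ) ≤ (n:ℝ) := by exact_mod_cast (by omega : 2 ≤ n)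
      linarith
    have hlr : (2:ℝ) ≤ (l:ℝ) := by exact_mod_cast hl2
    have hlnr : 2 * (l:ℝ) ≤ (n:ℝ) := by exact_mod_cast hln
    have hq0 : 0 ≤ q := by apply div_nonneg <;> linarith
    have hq1 : q ≤ 1 := by rw [hq, div_le_one hn1]; linarith
    have hqhalf : q ≤ 1/2 := by
      rw [hq, div_le_iff₀ hn1]; linarith
    have hβ0 : 0 ≤ β := by
      apply div_nonneg _ (by linarith)
      have : (l:ℝ) + 1 ≤ (n:ℝ) := by exact_mod_cast (by omega : l + 1 ≤ n)
      linarith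
    have hβ1 : β ≤ 1 := by rw [hβ, div_le_one hn1]; linarith
    -- cast lemmas
    have hcl : ((l - 1 : ℕ) : ℝ) = (l:ℝ) - 1 := by
      rw [Nat.cast_sub (by omega)]; simp
    have hcn : ((n - 1 : ℕ) : ℝ) = (n:ℝ) - 1 := by
      rw [Nat.cast_sub (by omega)]; simp
    have hcnl : ((n - l - 1 : ℕ) : ℝ) = (n:ℝ) - (l:ℝ) - 1 := by
      rw [Nat.sub_sub, Nat.cast_sub (by omega)]; push_cast; ring
    have hKlen : ∀ c : Fin r, K c ≤ n - 1 := fun c => by have := hKn c; omega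
    -- ratio bounds
    have hratioA : ∀ c : Fin r,
        (((l-1).choose (K c) : ℝ) / ((n-1).choose (K c) : ℝ)) ≤ q ^ (K c) := by
      intro c
      have h := choose_ratio_le (l-1) (n-1) (K c) (by omega) (hKlen c)
      rw [hcl, hcn] at h
      exact h
    have hratioB : ∀ c : Fin r,
        (((n-l-1).choose (K c) : ℝ) / ((n-1).choose (K c) : ℝ)) ≤ β ^ (K c) := by
      intro c
      have h := choose_ratio_le (n-l-1) (n-1) (K c) (by omega) (hKlen c)
      rw [hcnl, hcn] at h
      have hββ : ((n:ℝ) - (l:ℝ) - 1) / ((n:ℝ) - 1) = β := by rw [hβ]; ring_nf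
      rw [hββ] at h
      exact h
    -- nonnegativity of the sums
    have hA0 : 0 ≤ ∑ c, μ c * (((l-1).choose (K c) : ℝ) / ((n-1).choose (K c) : ℝ)) := by
      apply Finset.sum_nonneg
      intro c _
      apply mul_nonneg (hμ c).le (div_nonneg (Nat.cast_nonneg _) (Nat.cast_nonneg _))
    have hB0 : 0 ≤ ∑ c, μ c * (((n-l-1).choose (K c) : ℝ) / ((n-1).choose (K c) : ℝ)) := by
      apply Finset.sum_nonneg
      intro c _
      apply mul_nonneg (hμ c).le (div_nonneg (Nat.cast_nonneg _) (Nat.cast_nonneg _))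
    -- bound on A
    have hmuX : μt * X = (1/2:ℝ) ^ (k-1) := by
      rw [hXdef]; field_simp
    have hA : (∑ c, μ c * (((l-1).choose (K c) : ℝ) / ((n-1).choose (K c) : ℝ))) ≤
        q * (μt * (1 + (1 - μt) * X)) := by
      rw [← Finset.sum_erase_add univ _ (mem_univ lst)]
      have part1 : (∑ c ∈ univ.erase lst,
          μ c * (((l-1).choose (K c) : ℝ) / ((n-1).choose (K c) : ℝ))) ≤ μt * q := by
        rw [hμt, Finset.sum_mul]
        apply Finset.sum_le_sum
        intro c _
        apply mul_le_mul_of_nonneg_left _ (hμ c).le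
        calc (((l-1).choose (K c) : ℝ) / ((n-1).choose (K c) : ℝ)) ≤ q ^ (K c) := hratioA c
          _ ≤ q ^ 1 := pow_le_pow_of_le_one hq0 hq1 (hK1 c)
          _ = q := pow_one q
      have part2 : μ lst * (((l-1).choose (K lst) : ℝ) / ((n-1).choose (K lst) : ℝ)) ≤
          (1 - μt) * (q * (μt * X)) := by
        rw [← hμlst]
        apply mul_le_mul_of_nonneg_left _ (hμ lst).le
        calc (((l-1).choose (K lst) : ℝ) / ((n-1).choose (K lst) : ℝ)) ≤ q ^ (K lst) := hratioA lst
          _ = q ^ ((k - 1) + 1) := by rw [← hkdef]; congr 1; omega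
          _ = q ^ (k-1) * q := pow_succ q (k-1)
          _ ≤ (1/2:ℝ) ^ (k-1) * q := by
              apply mul_le_mul_of_nonneg_right (pow_le_pow_left₀ hq0 hqhalf _) hq0
          _ = q * (μt * X) := by rw [hmuX]; ring
      calc (∑ c ∈ univ.erase lst,
            μ c * (((l-1).choose (K c) : ℝ) / ((n-1).choose (K c) : ℝ))) +
            μ lst * (((l-1).choose (K lst) : ℝ) / ((n-1).choose (K lst) : ℝ))
          ≤ μt * q + (1 - μt) * (q * (μt * X)) := add_le_add part1 part2
        _ = q * (μt * (1 + (1 - μt) * X)) := by ring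
    -- bound on B
    have hB : (∑ c, μ c * (((n-l-1).choose (K c) : ℝ) / ((n-1).choose (K c) : ℝ))) ≤
        β * μt + (1 - μt) * β ^ k := by
      rw [← Finset.sum_erase_add univ _ (mem_univ lst)]
      have part1 : (∑ c ∈ univ.erase lst,
          μ c * (((n-l-1).choose (K c) : ℝ) / ((n-1).choose (K c) : ℝ))) ≤ μt * β := by
        rw [hμt, Finset.sum_mul]
        apply Finset.sum_le_sum
        intro c _
        apply mul_le_mul_of_nonneg_left _ (hμ c).le
        calc (((n-l-1).choose (K c) : ℝ) / ((n-1).choose (K c) : ℝ)) ≤ β ^ (K c) := hratioB c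
          _ ≤ β ^ 1 := pow_le_pow_of_le_one hβ0 hβ1 (hK1 c)
          _ = β := pow_one β
      have part2 : μ lst * (((n-l-1).choose (K lst) : ℝ) / ((n-1).choose (K lst) : ℝ)) ≤
          (1 - μt) * β ^ k := by
        rw [← hμlst]
        apply mul_le_mul_of_nonneg_left _ (hμ lst).le
        have := hratioB lst
        rw [← hkdef] at this
        exact this
      calc (∑ c ∈ univ.erase lst,
            μ c * (((n-l-1).choose (K c) : ℝ) / ((n-1).choose (K c) : ℝ))) +
            μ lst * (((n-l-1).choose (K lst) : ℝ) / ((n-1).choose (K lst) : ℝ))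
          ≤ μt * β + (1 - μt) * β ^ k := add_le_add part1 part2
        _ = β * μt + (1 - μt) * β ^ k := by ring
    exact per_l_analytic n l k μt X hμt0 hμt1 hXdef hXk hk2 hl2 hln _ _ hA0 hB0 hA hB
  -- sum up
  calc ∑ l ∈ Finset.Icc 2 (n / 2), (n.choose l : ℝ) * Pr n μ K (Bevent n r l)
      ≤ ∑ l ∈ Finset.Icc 2 (n / 2), μt ^ l * M := Finset.sum_le_sum per_l
    _ = (∑ l ∈ Finset.Icc 2 (n / 2), μt ^ l) * M := (Finset.sum_mul _ _ _).symm
    _ ≤ (μt ^ 2 / (1 - μt)) * M :=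
        mul_le_mul_of_nonneg_right (geom_bound μt hμt0 hμt1 (n/2)) hM0
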